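/- Let h(s) = ∑_{μ∈S} e^{⟨μ,s⟩} be a finite sum of exponentials with S−S spanning 𝔞, and let g = ∇ log h. Then at every point s ∈ 𝔞, the differential dg_s satisfies ⟨u, dg_s(u)⟩ = (1/(2h(s)²))·∑_{μ,μ'∈S} (⟨μ,u⟩ − ⟨μ',u⟩)² e^{⟨μ+μ',s⟩} > 0 for all nonzero u ∈ 𝔞; in particular g is locally invertible everywhere. -/

import Mathlib

open scoped RealInnerProductSpace
open Finset

lemma key_sum_stmt13 {ι : Type*} (S : Finset ι) (a e : ι → ℝ) :
    ∑ μ ∈ S, ∑ μ' ∈ S, (a μ - a μ') ^ 2 * (e μ * e μ')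
      = 2 * ((∑ μ ∈ S, e μ) * (∑ μ ∈ S, e μ * a μ ^ 2)) - 2 * (∑ μ ∈ S, e μ * a μ) ^ 2 := by
  calc ∑ μ ∈ S, ∑ μ' ∈ S, (a μ - a μ') ^ 2 * (e μ * e μ')
      = ∑ μ ∈ S, ∑ μ' ∈ S, ((e μ * a μ ^ 2) * e μ' + e μ * (e μ' * a μ' ^ 2)
          - 2 * ((e μ * a μ) * (e μ' * a μ'))) :=
        Finset.sum_congr rfl fun μ _ => Finset.sum_congr rfl fun μ' _ => by ring
    _ = 2 * ((∑ μ ∈ S, e μ) * (∑ μ ∈ S, e μ * a μ ^ 2)) - 2 * (∑ μ ∈ S, e μ * a μ) ^ 2 := by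
        simp only [Finset.sum_add_distrib, Finset.sum_sub_distrib, ← Finset.mul_sum]
        simp only [← Finset.sum_mul]
        ring

/-- For `h(s) = ∑_{μ∈S} e^{⟨μ,s⟩}` with `S - S` spanning `𝔞`, and `g = ∇h/h = ∇ log h`, at
every point `s` the differential `dg_s` satisfies
`⟨u, dg_s(u)⟩ = (1/(2h(s)²))·∑_{μ,μ'} (⟨μ,u⟩-⟨μ',u⟩)² e^{⟨μ+μ',s⟩} > 0` for `u ≠ 0`;
in particular `g` is locally invertible everywhere. -/
theorem stmt_13 {E : Type*} [NormedAddCommGroup E] [InnerProductSpace ℝ E]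
    [FiniteDimensional ℝ E]
    (S : Finset E) (hS : S.Nonempty)
    (hspan : Submodule.span ℝ {x : E | ∃ μ ∈ S, ∃ μ' ∈ S, x = μ - μ'} = ⊤)
    (h : E → ℝ) (hh : ∀ s, h s = ∑ μ ∈ S, Real.exp ⟪μ, s⟫)
    (g : E → E) (hg : ∀ s, g s = (h s)⁻¹ • gradient h s) :
    ∀ s : E,
      (∀ u : E, ⟪u, fderiv ℝ g s u⟫
          = (1 / (2 * (h s) ^ 2)) *
              ∑ μ ∈ S, ∑ μ' ∈ S, (⟪μ, u⟫ - ⟪μ', u⟫) ^ 2 * Real.exp ⟪μ + μ', s⟫) ∧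
      (∀ u : E, u ≠ 0 → 0 < ⟪u, fderiv ℝ g s u⟫) ∧
      (∃ t ∈ nhds s, Set.InjOn g t) := by
  classical
  have hfun : h = fun t => ∑ μ ∈ S, Real.exp ⟪μ, t⟫ := funext hh
  subst hfun
  set h : E → ℝ := fun t => ∑ μ ∈ S, Real.exp ⟪μ, t⟫ with hdef
  have hpos : ∀ t, 0 < h t := fun t => Finset.sum_pos (fun μ _ => Real.exp_pos _) hS
  -- fderiv of h
  have hL : ∀ t : E, HasFDerivAt h (∑ μ ∈ S, Real.exp ⟪μ, t⟫ • (innerSL ℝ μ)) t := by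
    intro t
    exact HasFDerivAt.fun_sum fun μ _ =>
      (Real.hasDerivAt_exp ⟪μ, t⟫).comp_hasFDerivAt t (innerSL ℝ μ).hasFDerivAt
  -- gradient of h
  have hgrad : ∀ t : E, gradient h t = ∑ μ ∈ S, Real.exp ⟪μ, t⟫ • μ := by
    intro t
    apply HasGradientAt.gradient
    rw [hasGradientAt_iff_hasFDerivAt]
    refine (hL t).congr_fderiv ?_
    ext u
    simp [inner_sum, inner_smul_left, real_inner_comm]
  have hgG : g = fun t => (h t)⁻¹ • ∑ μ ∈ S, Real.exp ⟪μ, t⟫ • μ := by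
    funext t; rw [hg t, hgrad t]
  -- derivative of Φ t = ∑ exp⟪μ,t⟫ • μ
  have hΦ : ∀ t : E, HasFDerivAt (fun t => ∑ μ ∈ S, Real.exp ⟪μ, t⟫ • μ)
      (∑ μ ∈ S, (Real.exp ⟪μ, t⟫ • (innerSL ℝ μ)).smulRight μ) t := by
    intro t
    exact HasFDerivAt.fun_sum fun μ _ =>
      ((Real.hasDerivAt_exp ⟪μ, t⟫).comp_hasFDerivAt t (innerSL ℝ μ).hasFDerivAt).smul_const μ
  have hinv : ∀ t : E, HasFDerivAt (fun t => (h t)⁻¹)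
      (-(h t ^ 2)⁻¹ • ∑ μ ∈ S, Real.exp ⟪μ, t⟫ • (innerSL ℝ μ)) t :=
    fun t => (hasDerivAt_inv (hpos t).ne').comp_hasFDerivAt t (hL t)
  have hA : ∀ t : E, HasFDerivAt g
      ((h t)⁻¹ • (∑ μ ∈ S, (Real.exp ⟪μ, t⟫ • (innerSL ℝ μ)).smulRight μ)
        + (-(h t ^ 2)⁻¹ • ∑ μ ∈ S, Real.exp ⟪μ, t⟫ • (innerSL ℝ μ)).smulRight
            (∑ μ ∈ S, Real.exp ⟪μ, t⟫ • μ)) t := by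
    intro t
    rw [hgG]
    exact (hinv t).smul (hΦ t)
  intro s
  have hfd := (hA s).fderiv
  -- the main inner product formula
  have main : ∀ u : E, ⟪u, fderiv ℝ g s u⟫
      = (1 / (2 * (h s) ^ 2)) *
          ∑ μ ∈ S, ∑ μ' ∈ S, (⟪μ, u⟫ - ⟪μ', u⟫) ^ 2 * Real.exp ⟪μ + μ', s⟫ := by
    intro u
    rw [hfd]
    have hexp : ∀ μ μ' : E, Real.exp ⟪μ + μ', s⟫ = Real.exp ⟪μ, s⟫ * Real.exp ⟪μ', s⟫ := by
      intro μ μ'; rw [inner_add_left, Real.exp_add]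
    simp only [hexp]
    have lhs_eq : ⟪u, (((h s)⁻¹ • (∑ μ ∈ S, (Real.exp ⟪μ, s⟫ • (innerSL ℝ μ)).smulRight μ)
        + (-(h s ^ 2)⁻¹ • ∑ μ ∈ S, Real.exp ⟪μ, s⟫ • (innerSL ℝ μ)).smulRight
            (∑ μ ∈ S, Real.exp ⟪μ, s⟫ • μ)) : E →L[ℝ] E) u⟫
        = (h s)⁻¹ * (∑ μ ∈ S, Real.exp ⟪μ, s⟫ * ⟪μ, u⟫ ^ 2)
          - (h s ^ 2)⁻¹ * (∑ μ ∈ S, Real.exp ⟪μ, s⟫ * ⟪μ, u⟫) ^ 2 := by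
      simp only [ContinuousLinearMap.add_apply, ContinuousLinearMap.smul_apply,
        ContinuousLinearMap.smulRight_apply, ContinuousLinearMap.sum_apply,
        innerSL_apply_apply, smul_smul]
      rw [inner_add_right, inner_smul_right, inner_smul_right, inner_sum, inner_sum]
      simp only [inner_smul_right, real_inner_comm u, smul_eq_mul]
      simp only [pow_two, mul_assoc]
      ring
    rw [lhs_eq]
    rw [key_sum_stmt13 S (fun μ => ⟪μ, u⟫) (fun μ => Real.exp ⟪μ, s⟫)]
    have hne : h s ≠ 0 := (hpos s).ne'
    field_simp
    ring
  have hposd : ∀ u : E, u ≠ 0 → 0 < ⟪u, fderiv ℝ g s u⟫ := by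
    intro u hu
    rw [main u]
    have hnum : 0 < ∑ μ ∈ S, ∑ μ' ∈ S, (⟪μ, u⟫ - ⟪μ', u⟫) ^ 2 * Real.exp ⟪μ + μ', s⟫ := by
      by_contra hcon
      push_neg at hcon
      have hle : ∀ μ ∈ S, ∀ μ' ∈ S, (⟪μ, u⟫ - ⟪μ', u⟫) ^ 2 * Real.exp ⟪μ + μ', s⟫ = 0 := by
        intro μ hμ μ' hμ'
        by_contra hne0
        have hterm : 0 < (⟪μ, u⟫ - ⟪μ', u⟫) ^ 2 * Real.exp ⟪μ + μ', s⟫ := by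
          rcases lt_or_eq_of_le (mul_nonneg (sq_nonneg _) (Real.exp_pos _).le) with ht | ht
          · exact ht
          · exact absurd ht.symm hne0
        have : 0 < ∑ μ ∈ S, ∑ μ' ∈ S, (⟪μ, u⟫ - ⟪μ', u⟫) ^ 2 * Real.exp ⟪μ + μ', s⟫ := by
          apply Finset.sum_pos' (fun μ hμ => Finset.sum_nonneg fun μ' _ =>
            mul_nonneg (sq_nonneg _) (Real.exp_pos _).le)
          exact ⟨μ, hμ, Finset.sum_pos' (fun μ' _ =>
            mul_nonneg (sq_nonneg _) (Real.exp_pos _).le) ⟨μ', hμ', hterm⟩⟩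
        exact absurd this (not_lt.2 hcon)
      have horth : ∀ x ∈ {x : E | ∃ μ ∈ S, ∃ μ' ∈ S, x = μ - μ'}, (⟪x, u⟫ : ℝ) = 0 := by
        rintro x ⟨μ, hμ, μ', hμ', rfl⟩
        have h0 := hle μ hμ μ' hμ'
        have h2 : (⟪μ, u⟫ - ⟪μ', u⟫ : ℝ) ^ 2 = 0 := by
          rcases mul_eq_zero.1 h0 with h2 | h2
          · exact h2
          · exact absurd h2 (Real.exp_pos _).ne'
        rw [inner_sub_left]
        exact sq_eq_zero_iff.1 h2
      have humem : u ∈ Submodule.span ℝ {x : E | ∃ μ ∈ S, ∃ μ' ∈ S, x = μ - μ'} := by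
        rw [hspan]; trivial
      have hzero : (⟪u, u⟫ : ℝ) = 0 := by
        refine Submodule.span_induction (p := fun x _ => (⟪x, u⟫ : ℝ) = 0) ?_ ?_ ?_ ?_ humem
        · exact fun x hx => horth x hx
        · simp
        · intro x y _ _ hx hy; rw [inner_add_left, hx, hy, add_zero]
        · intro c x _ hx; rw [real_inner_smul_left, hx, mul_zero]
      exact hu (inner_self_eq_zero.1 hzero)
    have hfac : 0 < 1 / (2 * (h s) ^ 2) := by positivity
    exact mul_pos hfac hnum
  refine ⟨main, hposd, ?_⟩
  -- local injectivity
  have hinj : Function.Injective (fderiv ℝ g s) := by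
    intro u v huv
    by_contra hne
    have h1 := hposd (u - v) (sub_ne_zero.2 hne)
    rw [map_sub, huv, sub_self, inner_zero_right] at h1
    exact lt_irrefl 0 h1
  have hsurj : Function.Surjective ((fderiv ℝ g s).toLinearMap) :=
    (LinearMap.injective_iff_surjective).1 hinj
  let eqv : E ≃L[ℝ] E :=
    (LinearEquiv.ofBijective (fderiv ℝ g s).toLinearMap ⟨hinj, hsurj⟩).toContinuousLinearEquiv
  have heqv : (eqv : E →L[ℝ] E) = fderiv ℝ g s := ContinuousLinearMap.ext fun x => rfl
  have hcd : ContDiff ℝ 1 g := by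
    rw [hgG]
    have hcdh : ContDiff ℝ 1 h :=
      ContDiff.sum fun μ _ => Real.contDiff_exp.comp (innerSL ℝ μ).contDiff
    have hcdΦ : ContDiff ℝ 1 (fun t : E => ∑ μ ∈ S, Real.exp ⟪μ, t⟫ • μ) :=
      ContDiff.sum fun μ _ =>
        (Real.contDiff_exp.comp (innerSL ℝ μ).contDiff).smul contDiff_const
    exact (hcdh.inv fun t => (hpos t).ne').smul hcdΦ
  have hstrict : HasStrictFDerivAt g (eqv : E →L[ℝ] E) s := by
    rw [heqv]
    exact hcd.contDiffAt.hasStrictFDerivAt one_ne_zero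
  exact ⟨(hstrict.toOpenPartialHomeomorph g).source,
    (hstrict.toOpenPartialHomeomorph g).open_source.mem_nhds hstrict.mem_toOpenPartialHomeomorph_source,
    (hstrict.toOpenPartialHomeomorph g).injOn⟩
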